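/- (Holomorphic Hopf differential) Let Ω ⊆ ℂ be open and u : Ω → ℝ^m be C² with Δu(z) orthogonal to both u_x(z) and u_y(z) in ℝ^m for every z ∈ Ω. Then the function φ(z) := Σ_{i=1}^m (∂u^i/∂z)², where ∂u/∂z = (1/2)(u_x − i u_y), satisfies ∂φ/∂z̄ = 0; that is, the coefficient of the Hopf differential φ dz∧dz is holomorphic on Ω. -/

import Mathlib

open Complex Metric
open scoped RealInnerProductSpace

noncomputable section

/-- Euclidean space `ℝ^m`. -/
abbrev EucSp (m : ℕ) := EuclideanSpace ℝ (Fin m)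

/-- **holomorphic Hopf differential.** Let `u : Ω → ℝ^m` be `C²` on the open
set `Ω ⊆ ℂ` with `Δu` orthogonal to `u_x` and `u_y` everywhere.  Then
`φ = Σᵢ (∂u^i/∂z)²`, the coefficient of the Hopf differential, is holomorphic:
`∂φ/∂z̄ = 0` on `Ω`. -/
theorem statement17 (m : ℕ) (Ω : Set ℂ) (hΩ : IsOpen Ω)
    (u : ℂ → EucSp m) (hu : ContDiffOn ℝ 2 u Ω)
    (ux uy uxx uyy : ℂ → EucSp m)
    (hux : ux = fun z => fderivWithin ℝ u Ω z 1)
    (huy : uy = fun z => fderivWithin ℝ u Ω z Complex.I)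
    (huxx : uxx = fun z => fderivWithin ℝ ux Ω z 1)
    (huyy : uyy = fun z => fderivWithin ℝ uy Ω z Complex.I)
    (horth : ∀ z ∈ Ω, ⟪uxx z + uyy z, ux z⟫ = 0 ∧ ⟪uxx z + uyy z, uy z⟫ = 0)
    (φ : ℂ → ℂ)
    (hφ : φ = fun z => ∑ i : Fin m,
      ((1/2 : ℂ) * (((ux z i : ℝ) : ℂ) - Complex.I * ((uy z i : ℝ) : ℂ))) ^ 2) :
    ∀ z ∈ Ω,
      DifferentiableWithinAt ℝ φ Ω z ∧
      (fderivWithin ℝ φ Ω z) 1 + Complex.I * (fderivWithin ℝ φ Ω z) Complex.I = 0 := by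
  intro z hz
  have hUD : UniqueDiffOn ℝ Ω := hΩ.uniqueDiffOn
  have hC1 : ContDiffOn ℝ 1 (fderivWithin ℝ u Ω) Ω :=
    hu.fderivWithin (m := 1) hUD (by norm_num)
  have hdF : DifferentiableWithinAt ℝ (fderivWithin ℝ u Ω) Ω z :=
    (hC1.differentiableOn one_ne_zero) z hz
  set G : ℂ →L[ℝ] ℂ →L[ℝ] EucSp m := fderivWithin ℝ (fderivWithin ℝ u Ω) Ω z with hGdef
  have hG : HasFDerivWithinAt (fderivWithin ℝ u Ω) G Ω z := hdF.hasFDerivWithinAt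
  have hux' : HasFDerivWithinAt ux
      ((ContinuousLinearMap.apply ℝ (EucSp m) 1).comp G) Ω z := by
    rw [hux]
    exact (ContinuousLinearMap.apply ℝ (EucSp m) 1).hasFDerivAt.comp_hasFDerivWithinAt z hG
  have huy' : HasFDerivWithinAt uy
      ((ContinuousLinearMap.apply ℝ (EucSp m) Complex.I).comp G) Ω z := by
    rw [huy]
    exact (ContinuousLinearMap.apply ℝ (EucSp m) Complex.I).hasFDerivAt.comp_hasFDerivWithinAt z hG
  have hsym : IsSymmSndFDerivWithinAt ℝ u Ω z :=
    (hu.contDiffWithinAt hz).isSymmSndFDerivWithinAt (by simp) hUD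
      (subset_closure (by rwa [hΩ.interior_eq])) hz
  have hsymIG : G Complex.I 1 = G 1 Complex.I := hsym Complex.I 1
  have ha : ∀ i : Fin m, HasFDerivWithinAt (fun w => ((ux w i : ℝ) : ℂ))
      ((Complex.ofRealCLM.comp (EuclideanSpace.proj i)).comp
        ((ContinuousLinearMap.apply ℝ (EucSp m) 1).comp G)) Ω z := fun i =>
    (Complex.ofRealCLM.comp (EuclideanSpace.proj i)).hasFDerivAt.comp_hasFDerivWithinAt z hux'
  have hb : ∀ i : Fin m, HasFDerivWithinAt (fun w => ((uy w i : ℝ) : ℂ))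
      ((Complex.ofRealCLM.comp (EuclideanSpace.proj i)).comp
        ((ContinuousLinearMap.apply ℝ (EucSp m) Complex.I).comp G)) Ω z := fun i =>
    (Complex.ofRealCLM.comp (EuclideanSpace.proj i)).hasFDerivAt.comp_hasFDerivWithinAt z huy'
  have hf : ∀ i : Fin m, HasFDerivWithinAt
      (fun w => (1/2 : ℂ) * (((ux w i : ℝ) : ℂ) - Complex.I * ((uy w i : ℝ) : ℂ)))
      ((1/2 : ℂ) • ((Complex.ofRealCLM.comp (EuclideanSpace.proj i)).comp
          ((ContinuousLinearMap.apply ℝ (EucSp m) 1).comp G)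
        - Complex.I • (Complex.ofRealCLM.comp (EuclideanSpace.proj i)).comp
          ((ContinuousLinearMap.apply ℝ (EucSp m) Complex.I).comp G))) Ω z := fun i =>
    ((ha i).sub ((hb i).const_mul Complex.I)).const_mul (1/2 : ℂ)
  have hφ' : HasFDerivWithinAt φ
      (∑ i : Fin m,
        (((1/2 : ℂ) * (((ux z i : ℝ) : ℂ) - Complex.I * ((uy z i : ℝ) : ℂ))) •
          ((1/2 : ℂ) • ((Complex.ofRealCLM.comp (EuclideanSpace.proj i)).comp
              ((ContinuousLinearMap.apply ℝ (EucSp m) 1).comp G)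
            - Complex.I • (Complex.ofRealCLM.comp (EuclideanSpace.proj i)).comp
              ((ContinuousLinearMap.apply ℝ (EucSp m) Complex.I).comp G)))
         + ((1/2 : ℂ) * (((ux z i : ℝ) : ℂ) - Complex.I * ((uy z i : ℝ) : ℂ))) •
          ((1/2 : ℂ) • ((Complex.ofRealCLM.comp (EuclideanSpace.proj i)).comp
              ((ContinuousLinearMap.apply ℝ (EucSp m) 1).comp G)
            - Complex.I • (Complex.ofRealCLM.comp (EuclideanSpace.proj i)).comp
              ((ContinuousLinearMap.apply ℝ (EucSp m) Complex.I).comp G))))) Ω z := by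
    rw [hφ]
    simp only [pow_two]
    exact HasFDerivWithinAt.fun_sum (fun i _ => (hf i).fun_mul (hf i))
  refine ⟨hφ'.differentiableWithinAt, ?_⟩
  rw [hφ'.fderivWithin (hUD z hz)]
  obtain ⟨h1, h2⟩ := horth z hz
  rw [PiLp.inner_apply] at h1 h2
  simp only [RCLike.inner_apply, conj_trivial, PiLp.add_apply] at h1 h2
  have hfdx : fderivWithin ℝ ux Ω z = (ContinuousLinearMap.apply ℝ (EucSp m) 1).comp G :=
    hux'.fderivWithin (hUD z hz)
  have hfdy : fderivWithin ℝ uy Ω z = (ContinuousLinearMap.apply ℝ (EucSp m) Complex.I).comp G :=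
    huy'.fderivWithin (hUD z hz)
  have hxxG : ∀ i : Fin m, uxx z i = G 1 1 i := by
    intro i; simp only [huxx, hfdx]; rfl
  have hyyG : ∀ i : Fin m, uyy z i = G Complex.I Complex.I i := by
    intro i; simp only [huyy, hfdy]; rfl
  simp only [ContinuousLinearMap.sum_apply, ContinuousLinearMap.add_apply,
    ContinuousLinearMap.smul_apply, ContinuousLinearMap.sub_apply,
    ContinuousLinearMap.comp_apply, ContinuousLinearMap.apply_apply,
    Complex.ofRealCLM_apply, PiLp.proj_apply, smul_eq_mul]
  rw [hsymIG]
  simp only [← hxxG, ← hyyG]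
  rw [Finset.mul_sum, ← Finset.sum_add_distrib]
  calc
    ∑ x : Fin m,
        ((1 / 2 * (↑(ux z x) - Complex.I * ↑(uy z x)) *
            (1 / 2 * (↑(uxx z x) - Complex.I * ↑(G 1 Complex.I x))) +
          1 / 2 * (↑(ux z x) - Complex.I * ↑(uy z x)) *
            (1 / 2 * (↑(uxx z x) - Complex.I * ↑(G 1 Complex.I x)))) +
          Complex.I *
            (1 / 2 * (↑(ux z x) - Complex.I * ↑(uy z x)) *
                (1 / 2 * (↑(G 1 Complex.I x) - Complex.I * ↑(uyy z x))) +
              1 / 2 * (↑(ux z x) - Complex.I * ↑(uy z x)) *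
                (1 / 2 * (↑(G 1 Complex.I x) - Complex.I * ↑(uyy z x)))))
      = ∑ x : Fin m, ((1/2 : ℂ) * (((uxx z x + uyy z x) * ux z x : ℝ) : ℂ)
          - (Complex.I * (1/2)) * (((uxx z x + uyy z x) * uy z x : ℝ) : ℂ)) := by
        refine Finset.sum_congr rfl fun x _ => ?_
        push_cast
        linear_combination ((-1/2 : ℂ) * (ux z x : ℝ) * (uyy z x : ℝ)
          + (1/2 : ℂ) * Complex.I * (uy z x : ℝ) * (uyy z x : ℝ)) * Complex.I_sq
    _ = (1/2 : ℂ) * ((∑ x : Fin m, (uxx z x + uyy z x) * ux z x : ℝ) : ℂ)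
          - (Complex.I * (1/2)) * ((∑ x : Fin m, (uxx z x + uyy z x) * uy z x : ℝ) : ℂ) := by
        rw [Finset.sum_sub_distrib, ← Finset.mul_sum, ← Finset.mul_sum, Complex.ofReal_sum,
          Complex.ofReal_sum]
    _ = 0 := by
          rw [show ∑ x : Fin m, (uxx z x + uyy z x) * ux z x = 0 by
                rw [← h1]; exact Finset.sum_congr rfl fun x _ => mul_comm _ _,
              show ∑ x : Fin m, (uxx z x + uyy z x) * uy z x = 0 by
                rw [← h2]; exact Finset.sum_congr rfl fun x _ => mul_comm _ _]; simp
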